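/- Every graph with chromatic number at least 4 contains a K_4 minor. -/

import Mathlib

open SimpleGraph


open SimpleGraph

/-- `B` is a system of branch sets witnessing a `K_n` minor in `G`:
nonempty, connected, pairwise disjoint sets with an edge between any two of them. -/
def IsCompleteMinorWitness {V : Type*} (G : SimpleGraph V) (n : ℕ)
    (B : Fin n → Set V) : Prop :=
  (∀ i, (B i).Nonempty) ∧ (∀ i, (G.induce (B i)).Connected) ∧
  (∀ i j, i ≠ j → Disjoint (B i) (B j)) ∧
  (∀ i j, i ≠ j → ∃ u ∈ B i, ∃ v ∈ B j, G.Adj u v)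

/-- `G` contains a complete minor `K_n`. -/
def HasCompleteMinor {V : Type*} (G : SimpleGraph V) (n : ℕ) : Prop :=
  ∃ B : Fin n → Set V, IsCompleteMinorWitness G n B

/-- `A`, `B` are systems of branch sets witnessing a complete bipartite `K_{m,n}`
minor in `G`. -/
def IsBipartiteMinorWitness {V : Type*} (G : SimpleGraph V) (m n : ℕ)
    (A : Fin m → Set V) (B : Fin n → Set V) : Prop :=
  (∀ i, (A i).Nonempty) ∧ (∀ j, (B j).Nonempty) ∧
  (∀ i, (G.induce (A i)).Connected) ∧ (∀ j, (G.induce (B j)).Connected) ∧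
  (∀ i j, i ≠ j → Disjoint (A i) (A j)) ∧
  (∀ i j, i ≠ j → Disjoint (B i) (B j)) ∧
  (∀ i j, Disjoint (A i) (B j)) ∧
  (∀ i j, ∃ u ∈ A i, ∃ v ∈ B j, G.Adj u v)

/-- `G` contains a complete bipartite minor `K_{m,n}`. -/
def HasBipartiteMinor {V : Type*} (G : SimpleGraph V) (m n : ℕ) : Prop :=
  ∃ (A : Fin m → Set V) (B : Fin n → Set V), IsBipartiteMinorWitness G m n A B

/-- Wagner characterization: a graph is planar iff it has no `K_5` and no `K_{3,3}` minor. -/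
def IsPlanar {V : Type*} (G : SimpleGraph V) : Prop :=
  ¬ HasCompleteMinor G 5 ∧ ¬ HasBipartiteMinor G 3 3

/-- Minor characterization of outerplanarity: no `K_4` and no `K_{2,3}` minor. -/
def IsOuterplanar {V : Type*} (G : SimpleGraph V) : Prop :=
  ¬ HasCompleteMinor G 4 ∧ ¬ HasBipartiteMinor G 2 3

section Helpers

universe u w

variable {V : Type u} {W : Type w} {G : SimpleGraph V} {G' : SimpleGraph W}

lemma connected_induce_image {U : Type*} {H : SimpleGraph U} (f : U → V) {T : Set U}
    (hadj : ∀ a b, a ∈ T → b ∈ T → H.Adj a b → G.Adj (f a) (f b))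
    (hc : (H.induce T).Connected) : (G.induce (f '' T)).Connected := by
  let hhom : H.induce T →g G.induce (f '' T) :=
    ⟨fun x => ⟨f x.1, x.1, x.2, rfl⟩, fun {p q} h => hadj _ _ p.2 q.2 h⟩
  have hsurj : Function.Surjective hhom := by
    rintro ⟨w, x, hx, rfl⟩; exact ⟨⟨x, hx⟩, Subtype.ext (rfl : f x = f x)⟩
  exact hc.map hhom hsurj

lemma minor_map (f : V → W) (hinj : Function.Injective f)
    (hadj : ∀ a b, G.Adj a b → G'.Adj (f a) (f b)) :
    HasCompleteMinor G 4 → HasCompleteMinor G' 4 := by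
  rintro ⟨B, hB1, hB2, hB3, hB4⟩
  refine ⟨fun i => f '' B i, fun i => (hB1 i).image f, fun i => ?_,
    fun i j hij => ?_, fun i j hij => ?_⟩
  · exact connected_induce_image f (fun a b _ _ h => hadj _ _ h) (hB2 i)
  · exact (Set.disjoint_image_iff hinj).mpr (hB3 i j hij)
  · obtain ⟨u, hu, v, hv, huv⟩ := hB4 i j hij
    exact ⟨f u, ⟨u, hu, rfl⟩, f v, ⟨v, hv, rfl⟩, hadj _ _ huv⟩

lemma minor_induce {s : Set V} : HasCompleteMinor (G.induce s) 4 → HasCompleteMinor G 4 :=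
  minor_map Subtype.val Subtype.val_injective (fun _ _ h => h)

end Helpers
section RSet

universe u

variable {V : Type u} {G : SimpleGraph V}

/-- The set of vertices of `s` reachable from `c` within the induced graph on `s`. -/
def RSet (G : SimpleGraph V) (s : Set V) (c : V) : Set V :=
  {t : V | ∃ (hc : c ∈ s) (ht : t ∈ s), (G.induce s).Reachable ⟨c, hc⟩ ⟨t, ht⟩}

lemma RSet_subset {s : Set V} {c : V} : RSet G s c ⊆ s := fun _t ⟨_, ht, _⟩ => ht

lemma mem_RSet_self {s : Set V} {c : V} (hc : c ∈ s) : c ∈ RSet G s c :=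
  ⟨hc, hc, Reachable.refl _⟩

lemma RSet_closed {s : Set V} {c t u : V} (ht : t ∈ RSet G s c) (ha : G.Adj t u)
    (hu : u ∈ s) : u ∈ RSet G s c := by
  obtain ⟨hc, hts, hr⟩ := ht
  exact ⟨hc, hu, hr.trans (SimpleGraph.Adj.reachable
    (show (G.induce s).Adj ⟨t, hts⟩ ⟨u, hu⟩ from ha))⟩

lemma mem_RSet_symm {s : Set V} {c t : V} (ht : t ∈ RSet G s c) : c ∈ RSet G s t := by
  obtain ⟨hc, hts, hr⟩ := ht
  exact ⟨hts, hc, hr.symm⟩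

lemma mem_RSet_trans {s : Set V} {c t u : V} (ht : t ∈ RSet G s c)
    (hu : u ∈ RSet G s t) : u ∈ RSet G s c := by
  obtain ⟨hc, hts, hr⟩ := ht
  obtain ⟨hts', hus, hr'⟩ := hu
  exact ⟨hc, hus, hr.trans hr'⟩

lemma RSet_connected {s : Set V} {c : V} (hc : c ∈ s) :
    (G.induce (RSet G s c)).Connected := by
  classical
  apply G.induce_connected_of_patches c (mem_RSet_self hc)
  intro t ht
  obtain ⟨_, hts, hr⟩ := ht
  obtain ⟨w⟩ := hr
  refine ⟨Subtype.val '' {x : s | x ∈ w.support}, ?_, ⟨⟨c, hc⟩, w.start_mem_support, rfl⟩,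
    ⟨⟨t, hts⟩, w.end_mem_support, rfl⟩, ?_⟩
  · rintro _ ⟨x, hx, rfl⟩
    exact ⟨hc, x.2, ⟨w.takeUntil x hx⟩⟩
  · have hconn := connected_induce_image (G := G) (H := G.induce s) Subtype.val
      (fun a b _ _ h => h) (w.connected_induce_support)
    exact hconn.preconnected _ _

lemma ncard_neighborSet_induce {s : Set V} {x : V} (hx : x ∈ s)
    (hcl : ∀ t, G.Adj x t → t ∈ s) :
    ((G.induce s).neighborSet ⟨x, hx⟩).ncard = (G.neighborSet x).ncard := by
  have himg : Subtype.val '' ((G.induce s).neighborSet ⟨x, hx⟩) = G.neighborSet x := by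
    ext t
    constructor
    · rintro ⟨y, hy, rfl⟩; exact hy
    · intro ht; exact ⟨⟨t, hcl t ht⟩, ht, rfl⟩
  rw [← himg, Set.ncard_image_of_injective _ Subtype.val_injective]

lemma exists_third [Finite V] {N : Set V} (h3 : 3 ≤ N.ncard) {y z : V}
    (hyz : y ≠ z) : ∃ p ∈ N, p ≠ y ∧ p ≠ z := by
  by_contra h
  push_neg at h
  have hsub : N ⊆ {y, z} := by
    intro p hp
    rcases eq_or_ne p y with rfl | hpy
    · exact Set.mem_insert _ _
    · rcases eq_or_ne p z with rfl | hpz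
      · exact Set.mem_insert_of_mem _ rfl
      · exact absurd hpz (not_not.mpr (h p hp hpy))
  have := Set.ncard_le_ncard hsub (Set.toFinite _)
  have h2 : ({y, z} : Set V).ncard ≤ 2 := by
    apply le_trans (Set.ncard_insert_le _ _); simp
  omega

lemma eq_triple [Finite V] {N : Set V} (hle : N.ncard ≤ 3) {y z p : V}
    (hy : y ∈ N) (hz : z ∈ N) (hp : p ∈ N) (hyz : y ≠ z) (hpy : p ≠ y) (hpz : p ≠ z) :
    N = {y, z, p} := by
  symm
  apply Set.eq_of_subset_of_ncard_le
  · intro q hq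
    simp only [Set.mem_insert_iff, Set.mem_singleton_iff] at hq
    rcases hq with rfl | rfl | rfl <;> assumption
  · have : ({y, z, p} : Set V).ncard = 3 := by
      rw [Set.ncard_insert_of_notMem (by simp [hyz, hpy.symm]),
        Set.ncard_insert_of_notMem (by simp [hpz.symm]), Set.ncard_singleton]
    omega
  · exact Set.toFinite _

end RSet
section Contract

universe u

variable {V : Type u} {G : SimpleGraph V}

/-- The graph obtained from `G` by contracting the edge `x y` (merging `y` into `x`). -/
def CGraph (G : SimpleGraph V) (x y : V) : SimpleGraph {v : V // v ≠ y} where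
  Adj p q := p.1 ≠ q.1 ∧ (G.Adj p q ∨ (p.1 = x ∧ G.Adj y q) ∨ (q.1 = x ∧ G.Adj p y))
  symm := ⟨by
    rintro p q ⟨hne, h⟩
    refine ⟨hne.symm, ?_⟩
    rcases h with h | ⟨h1, h2⟩ | ⟨h1, h2⟩
    · exact Or.inl h.symm
    · exact Or.inr (Or.inr ⟨h1, h2.symm⟩)
    · exact Or.inr (Or.inl ⟨h1, h2.symm⟩)⟩
  loopless := ⟨fun p h => h.1 rfl⟩

variable {x y : V}

lemma CGraph_adj {p q : {v : V // v ≠ y}} :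
    (CGraph G x y).Adj p q ↔
      p.1 ≠ q.1 ∧ (G.Adj p q ∨ (p.1 = x ∧ G.Adj y q) ∨ (q.1 = x ∧ G.Adj p y)) :=
  Iff.rfl

lemma CGraph_reach_lift (hxy : G.Adj x y) {B' : Set {v : V // v ≠ y}}
    (p q : B') :
    ((CGraph G x y).induce B').Reachable p q →
      (G.induce (Subtype.val '' B' ∪ {y})).Reachable
        ⟨p.1.1, Or.inl ⟨p.1, p.2, rfl⟩⟩ ⟨q.1.1, Or.inl ⟨q.1, q.2, rfl⟩⟩ := by
  set s : Set V := Subtype.val '' B' ∪ {y} with hs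
  have hmem : ∀ r : B', r.1.1 ∈ s := fun r => Or.inl ⟨r.1, r.2, rfl⟩
  have hy : y ∈ s := Or.inr rfl
  rintro ⟨w⟩
  induction w with
  | nil => exact Reachable.refl _
  | @cons a c d h w ih =>
    refine Reachable.trans ?_ ih
    have h' : (CGraph G x y).Adj a.1 c.1 := h
    rw [CGraph_adj] at h'
    rcases h'.2 with hd | ⟨h1, h2⟩ | ⟨h1, h2⟩
    · exact SimpleGraph.Adj.reachable
        (show (G.induce s).Adj ⟨a.1.1, hmem a⟩ ⟨c.1.1, hmem c⟩ from hd)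
    · refine Reachable.trans (SimpleGraph.Adj.reachable
        (show (G.induce s).Adj ⟨a.1.1, hmem a⟩ ⟨y, hy⟩ from h1 ▸ hxy)) ?_
      exact SimpleGraph.Adj.reachable
        (show (G.induce s).Adj ⟨y, hy⟩ ⟨c.1.1, hmem c⟩ from h2)
    · refine Reachable.trans (SimpleGraph.Adj.reachable
        (show (G.induce s).Adj ⟨a.1.1, hmem a⟩ ⟨y, hy⟩ from h2)) ?_
      exact SimpleGraph.Adj.reachable
        (show (G.induce s).Adj ⟨y, hy⟩ ⟨c.1.1, hmem c⟩ from (h1 ▸ hxy).symm)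

lemma CGraph_connected_lift (hxy : G.Adj x y) {B' : Set {v : V // v ≠ y}}
    (hconn : ((CGraph G x y).induce B').Connected) (hxx : ⟨x, hxy.ne⟩ ∈ B') :
    (G.induce (Subtype.val '' B' ∪ {y})).Connected := by
  set s : Set V := Subtype.val '' B' ∪ {y} with hs
  have hy : y ∈ s := Or.inr rfl
  have hx : x ∈ s := Or.inl ⟨⟨x, hxy.ne⟩, hxx, rfl⟩
  have key : ∀ p : B', (G.induce s).Reachable ⟨x, hx⟩ ⟨p.1.1, Or.inl ⟨p.1, p.2, rfl⟩⟩ := by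
    intro p
    exact CGraph_reach_lift hxy ⟨⟨x, hxy.ne⟩, hxx⟩ p (hconn.preconnected _ _)
  rw [SimpleGraph.connected_iff]
  refine ⟨?_, ⟨⟨y, hy⟩⟩⟩
  · rintro ⟨v, hv⟩ ⟨u, hu⟩
    have hr : ∀ (w : V) (hw : w ∈ s), (G.induce s).Reachable ⟨x, hx⟩ ⟨w, hw⟩ := by
      rintro w (⟨p, hp, rfl⟩ | hweq)
      · exact key ⟨p, hp⟩
      · exact SimpleGraph.Adj.reachable (show (G.induce s).Adj ⟨x, hx⟩ ⟨w, _⟩ from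
          (by cases hweq; exact hxy))
    exact (hr v hv).symm.trans (hr u hu)

lemma CGraph_minor (hxy : G.Adj x y) :
    HasCompleteMinor (CGraph G x y) 4 → HasCompleteMinor G 4 := by
  classical
  rintro ⟨B', hB1, hB2, hB3, hB4⟩
  set xx : {v : V // v ≠ y} := ⟨x, hxy.ne⟩ with hxxdef
  refine ⟨fun i => Subtype.val '' B' i ∪ {t | t = y ∧ xx ∈ B' i}, fun i => ?_, fun i => ?_,
    fun i j hij => ?_, fun i j hij => ?_⟩
  · obtain ⟨p, hp⟩ := hB1 i
    exact ⟨p.1, Or.inl ⟨p, hp, rfl⟩⟩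
  · show (G.induce (Subtype.val '' B' i ∪ {t | t = y ∧ xx ∈ B' i})).Connected
    by_cases hxx : xx ∈ B' i
    · have : {t | t = y ∧ xx ∈ B' i} = ({y} : Set V) := by ext t; simp [hxx]
      rw [this]
      exact CGraph_connected_lift hxy (hB2 i) hxx
    · have h0 : {t | t = y ∧ xx ∈ B' i} = (∅ : Set V) := by ext t; simp [hxx]
      rw [h0, Set.union_empty]
      apply connected_induce_image Subtype.val _ (hB2 i)
      intro a b ha hb hadj
      have h' := hadj
      rw [CGraph_adj] at h'
      rcases h'.2 with hd | ⟨h1, _⟩ | ⟨h1, _⟩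
      · exact hd
      · exact absurd ha (by rw [(Subtype.ext h1 : a = xx)]; exact hxx)
      · exact absurd hb (by rw [(Subtype.ext h1 : b = xx)]; exact hxx)
  · rw [Set.disjoint_left]
    rintro t ht ht'
    rcases ht with ⟨p, hp, rfl⟩ | ⟨hty, hxxi⟩
    · rcases ht' with ⟨q, hq, hq2⟩ | ⟨hpy, _⟩
      · exact (Set.disjoint_left.mp (hB3 i j hij) hp) (Subtype.val_injective hq2 ▸ hq)
      · exact p.2 hpy
    · rcases ht' with ⟨q, hq, hq2⟩ | ⟨_, hxxj⟩
      · exact q.2 (hq2.trans hty)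
      · exact (Set.disjoint_left.mp (hB3 i j hij) hxxi) hxxj
  · obtain ⟨p, hp, q, hq, hpq⟩ := hB4 i j hij
    rw [CGraph_adj] at hpq
    rcases hpq.2 with hd | ⟨h1, h2⟩ | ⟨h1, h2⟩
    · exact ⟨p.1, Or.inl ⟨p, hp, rfl⟩, q.1, Or.inl ⟨q, hq, rfl⟩, hd⟩
    · refine ⟨y, Or.inr ⟨rfl, ?_⟩, q.1, Or.inl ⟨q, hq, rfl⟩, h2⟩
      have : p = xx := Subtype.ext h1
      exact this ▸ hp
    · refine ⟨p.1, Or.inl ⟨p, hp, rfl⟩, y, Or.inr ⟨rfl, ?_⟩, h2⟩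
      have : q = xx := Subtype.ext h1
      exact this ▸ hq

lemma CGraph_nbr_merged (hxy : G.Adj x y) :
    Subtype.val '' ((CGraph G x y).neighborSet ⟨x, hxy.ne⟩) =
      (G.neighborSet x ∪ G.neighborSet y) \ {x, y} := by
  ext t
  constructor
  · rintro ⟨q, hq, rfl⟩
    rw [SimpleGraph.mem_neighborSet, CGraph_adj] at hq
    rcases hq.2 with hd | ⟨_, h2⟩ | ⟨h1, _⟩
    · exact ⟨Or.inl hd, by simp [hq.1.symm, q.2]⟩
    · exact ⟨Or.inr h2, by simp [hq.1.symm, q.2]⟩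
    · exact absurd h1.symm hq.1
  · rintro ⟨ht, ht2⟩
    simp only [Set.mem_insert_iff, Set.mem_singleton_iff, not_or] at ht2
    refine ⟨⟨t, ht2.2⟩, ?_, rfl⟩
    rw [SimpleGraph.mem_neighborSet, CGraph_adj]
    exact ⟨fun h => ht2.1 h.symm, by rcases ht with h | h
                                     · exact Or.inl h
                                     · exact Or.inr (Or.inl ⟨rfl, h⟩)⟩

lemma CGraph_nbr_other (hxney : x ≠ y) {z : {v : V // v ≠ y}} (hz : z.1 ≠ x) :
    Subtype.val '' ((CGraph G x y).neighborSet z) =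
      (G.neighborSet z.1 \ {y}) ∪ {t | t = x ∧ G.Adj z.1 y} := by
  ext t
  constructor
  · rintro ⟨q, hq, rfl⟩
    rw [SimpleGraph.mem_neighborSet, CGraph_adj] at hq
    rcases hq.2 with hd | ⟨h1, _⟩ | ⟨h1, h2⟩
    · exact Or.inl ⟨hd, q.2⟩
    · exact absurd h1 hz
    · exact Or.inr ⟨h1, h2⟩
  · rintro (⟨ht, hty⟩ | ⟨htx, hzy⟩)
    · refine ⟨⟨t, hty⟩, ?_, rfl⟩
      rw [SimpleGraph.mem_neighborSet, CGraph_adj]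
      exact ⟨(SimpleGraph.Adj.ne ht), Or.inl ht⟩
    · subst htx
      refine ⟨⟨t, hxney⟩, ?_, rfl⟩
      rw [SimpleGraph.mem_neighborSet, CGraph_adj]
      exact ⟨fun h => hz h, Or.inr (Or.inr ⟨rfl, hzy⟩)⟩

end Contract
section K4Helpers

universe u

variable {V : Type u} {G : SimpleGraph V}

lemma conn_singleton (v : V) : (G.induce {v}).Connected := by
  rw [SimpleGraph.connected_iff]
  refine ⟨fun a b => ?_, ⟨⟨v, rfl⟩⟩⟩
  have : a = b := Subtype.ext (a.2.trans b.2.symm)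
  rw [this]

lemma K4_of_three_comp {x y z : V} {C : Set V}
    (hxy : G.Adj x y) (hxz : G.Adj x z) (hyz : G.Adj y z)
    (hCconn : (G.induce C).Connected)
    (hxC : x ∉ C) (hyC : y ∉ C) (hzC : z ∉ C)
    (ex : ∃ u ∈ C, G.Adj x u) (ey : ∃ u ∈ C, G.Adj y u) (ez : ∃ u ∈ C, G.Adj z u) :
    HasCompleteMinor G 4 := by
  have hCne : C.Nonempty := by obtain ⟨u, hu, _⟩ := ex; exact ⟨u, hu⟩
  refine ⟨![{x}, {y}, {z}, C], fun i => ?_, fun i => ?_, fun i j hij => ?_, fun i j hij => ?_⟩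
  · fin_cases i <;> simp [hCne]
  · fin_cases i <;> simp only [Matrix.cons_val_zero, Matrix.cons_val_one, Matrix.head_cons,
      Matrix.cons_val_two, Matrix.tail_cons, Matrix.cons_val_three] <;>
      first
        | exact conn_singleton _
        | exact hCconn
  · have hd : ∀ u v : V, u ≠ v → Disjoint ({u} : Set V) {v} := by
      intro u v huv; simp [huv]
    have hd2 : ∀ u : V, u ∉ C → Disjoint ({u} : Set V) C := by
      intro u hu; simp [hu]
    have hd3 : ∀ u : V, u ∉ C → Disjoint C ({u} : Set V) := fun u hu => (hd2 u hu).symm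
    fin_cases i <;> fin_cases j <;> simp only [Matrix.cons_val_zero, Matrix.cons_val_one,
      Matrix.head_cons, Matrix.cons_val_two, Matrix.tail_cons, Matrix.cons_val_three] <;>
      first
        | exact absurd rfl hij
        | exact hd _ _ hxy.ne
        | exact hd _ _ hxy.ne'
        | exact hd _ _ hxz.ne
        | exact hd _ _ hxz.ne'
        | exact hd _ _ hyz.ne
        | exact hd _ _ hyz.ne'
        | exact hd2 _ hxC
        | exact hd2 _ hyC
        | exact hd2 _ hzC
        | exact hd3 _ hxC
        | exact hd3 _ hyC
        | exact hd3 _ hzC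
  · obtain ⟨ux, hux, hux2⟩ := ex
    obtain ⟨uy, huy, huy2⟩ := ey
    obtain ⟨uz, huz, huz2⟩ := ez
    fin_cases i <;> fin_cases j <;> simp only [Matrix.cons_val_zero, Matrix.cons_val_one,
      Matrix.head_cons, Matrix.cons_val_two, Matrix.tail_cons, Matrix.cons_val_three] <;>
      first
        | exact absurd rfl hij
        | exact ⟨x, rfl, y, rfl, hxy⟩
        | exact ⟨y, rfl, x, rfl, hxy.symm⟩
        | exact ⟨x, rfl, z, rfl, hxz⟩
        | exact ⟨z, rfl, x, rfl, hxz.symm⟩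
        | exact ⟨y, rfl, z, rfl, hyz⟩
        | exact ⟨z, rfl, y, rfl, hyz.symm⟩
        | exact ⟨x, rfl, ux, hux, hux2⟩
        | exact ⟨ux, hux, x, rfl, hux2.symm⟩
        | exact ⟨y, rfl, uy, huy, huy2⟩
        | exact ⟨uy, huy, y, rfl, huy2.symm⟩
        | exact ⟨z, rfl, uz, huz, huz2⟩
        | exact ⟨uz, huz, z, rfl, huz2.symm⟩

lemma K4_of_four {x y z w : V}
    (hxy : G.Adj x y) (hxz : G.Adj x z) (hyz : G.Adj y z)
    (hxw : G.Adj x w) (hyw : G.Adj y w) (hzw : G.Adj z w) :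
    HasCompleteMinor G 4 := by
  refine K4_of_three_comp hxy hxz hyz (C := {w}) (conn_singleton w) ?_ ?_ ?_
    ⟨w, rfl, hxw⟩ ⟨w, rfl, hyw⟩ ⟨w, rfl, hzw⟩
  · simp [hxw.ne]
  · simp [hyw.ne]
  · simp [hzw.ne]

end K4Helpers
section MainLemma

universe u

lemma lemM (n : ℕ) : ∀ (V : Type u) (G : SimpleGraph V) (_ : Finite V) (_ : Nat.card V = n)
    (a b : V) (_ : G.Adj a b) (_ : ∀ x, x ≠ a → x ≠ b → 3 ≤ (G.neighborSet x).ncard)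
    (_ : ∃ x, x ≠ a ∧ x ≠ b), HasCompleteMinor G 4 := by
  induction n using Nat.strong_induction_on with
  | _ n IH =>
  rintro V G hfin hcard a b hab hdeg ⟨x0, hx0a, hx0b⟩
  haveI : Finite V := hfin
  classical
  -- generic recursion onto induced subgraphs
  have IHind : ∀ (s : Set V) (c d : V) (_ : c ∈ s) (_ : d ∈ s), (∃ v, v ∉ s) → G.Adj c d →
      (∀ t, t ∈ s → t ≠ c → t ≠ d → (∀ u, G.Adj t u → u ∈ s) ∧ t ≠ a ∧ t ≠ b) →
      (∃ t ∈ s, t ≠ c ∧ t ≠ d) → HasCompleteMinor G 4 := by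
    rintro s c d hc hd ⟨v0, hv0⟩ hcd hclose ⟨t0, ht0, ht0c, ht0d⟩
    have hlt : Nat.card ↥s < n := by
      have h1 : Nat.card ↥s = s.ncard := Nat.card_coe_set_eq s
      have h2 : s ⊂ Set.univ := Set.ssubset_univ_iff.mpr
        (by intro h; exact hv0 (h ▸ Set.mem_univ v0))
      have h3 := Set.ncard_lt_ncard h2 Set.finite_univ
      rw [Set.ncard_univ] at h3
      omega
    apply minor_induce (s := s)
    refine IH _ hlt ↥s (G.induce s) inferInstance rfl ⟨c, hc⟩ ⟨d, hd⟩ hcd ?_ ?_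
    · rintro ⟨t, ht⟩ h1 h2
      have h1' : t ≠ c := fun h => h1 (Subtype.ext h)
      have h2' : t ≠ d := fun h => h2 (Subtype.ext h)
      obtain ⟨hcl, hta, htb⟩ := hclose t ht h1' h2'
      rw [ncard_neighborSet_induce ht hcl]
      exact hdeg t hta htb
    · exact ⟨⟨t0, ht0⟩, fun h => ht0c (congrArg Subtype.val h),
        fun h => ht0d (congrArg Subtype.val h)⟩
  -- small cases
  by_cases hW1 : ∀ z, z ≠ a → z ≠ b → z = x0
  · exfalso
    have hsub : G.neighborSet x0 ⊆ {a, b} := by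
      intro t ht
      rw [SimpleGraph.mem_neighborSet] at ht
      by_contra htab
      simp only [Set.mem_insert_iff, Set.mem_singleton_iff, not_or] at htab
      exact ht.ne' (hW1 t htab.1 htab.2)
    have h1 := Set.ncard_le_ncard hsub (Set.toFinite _)
    have h2 : ({a, b} : Set V).ncard = 2 := Set.ncard_pair hab.ne
    have h3 := hdeg x0 hx0a hx0b
    omega
  push_neg at hW1
  obtain ⟨x1, hx1a, hx1b, hx1x0⟩ := hW1
  by_cases hW2 : ∀ z, z ≠ a → z ≠ b → z = x0 ∨ z = x1
  · -- |W| = 2 : direct K4 on {a, b, x0, x1}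
    have hnbr : ∀ z w : V, z ≠ a → z ≠ b → w ≠ a → w ≠ b → w ≠ z →
        G.neighborSet z = {a, b, w} := by
      intro z w hza hzb hwa hwb hwz
      have hsub : G.neighborSet z ⊆ {a, b, w} := by
        intro t ht
        rw [SimpleGraph.mem_neighborSet] at ht
        by_contra htab
        simp only [Set.mem_insert_iff, Set.mem_singleton_iff, not_or] at htab
        obtain ⟨hta, htb, htw⟩ := htab
        have htz : t ≠ z := ht.ne'
        rcases hW2 t hta htb with h1 | h1 <;> rcases hW2 z hza hzb with h2 | h2 <;>
          rcases hW2 w hwa hwb with h3 | h3 <;>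
          first
            | exact htz (h1.trans h2.symm)
            | exact htw (h1.trans h3.symm)
            | exact hwz (h3.trans h2.symm)
      have hcard : ({a, b, w} : Set V).ncard ≤ 3 := by
        apply le_trans (Set.ncard_insert_le _ _)
        have := Set.ncard_insert_le b ({w} : Set V)
        simp only [Set.ncard_singleton] at this ⊢
        omega
      exact Set.eq_of_subset_of_ncard_le hsub (le_trans hcard (hdeg z hza hzb))
        (Set.toFinite _)
    have h0 := hnbr x0 x1 hx0a hx0b hx1a hx1b hx1x0
    have h1 := hnbr x1 x0 hx1a hx1b hx0a hx0b (Ne.symm hx1x0)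
    have hx0a' : G.Adj x0 a := by rw [← SimpleGraph.mem_neighborSet, h0]; simp
    have hx0b' : G.Adj x0 b := by rw [← SimpleGraph.mem_neighborSet, h0]; simp
    have hx1a' : G.Adj x1 a := by rw [← SimpleGraph.mem_neighborSet, h1]; simp
    have hx1b' : G.Adj x1 b := by rw [← SimpleGraph.mem_neighborSet, h1]; simp
    have hx01 : G.Adj x0 x1 := by rw [← SimpleGraph.mem_neighborSet, h0]; simp
    exact K4_of_four hab hx0a'.symm hx0b'.symm hx1a'.symm hx1b'.symm hx01
  push_neg at hW2
  obtain ⟨x2, hx2a, hx2b, hx2x0, hx2x1⟩ := hW2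
  -- Case A : some edge has two distinct common neighbors
  by_cases hA : ∃ xe ye ue we : V, G.Adj xe ye ∧ G.Adj xe ue ∧ G.Adj ye ue ∧
      G.Adj xe we ∧ G.Adj ye we ∧ ue ≠ we
  · obtain ⟨xe, ye, ue, we, hxy, hxu, hyu, hxw, hyw, huw⟩ := hA
    set S : Set V := {t | t ≠ xe ∧ t ≠ ye} with hSdef
    have huS : ue ∈ S := ⟨hxu.ne', hyu.ne'⟩
    have hwS : we ∈ S := ⟨hxw.ne', hyw.ne'⟩
    by_cases hreach : we ∈ RSet G S ue
    · -- direct K4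
      obtain ⟨hc0, hw0, hr⟩ := hreach
      obtain ⟨wk0⟩ := hr
      obtain ⟨paw, hpa⟩ := wk0.toPath
      revert hpa
      cases paw with
      | nil => exact fun _ => absurd rfl huw
      | cons hadj1 q =>
        intro hpa
        rw [SimpleGraph.Walk.cons_isPath_iff] at hpa
        refine K4_of_three_comp hxy hxu hyu
          (C := Subtype.val '' {t | t ∈ q.support}) ?_ ?_ ?_ ?_ ?_ ?_ ?_
        · exact connected_induce_image Subtype.val (fun p q _ _ h => h)
            q.connected_induce_support
        · rintro ⟨t, ht, heq⟩; exact t.2.1 heq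
        · rintro ⟨t, ht, heq⟩; exact t.2.2 heq
        · rintro ⟨t, ht, heq⟩
          exact hpa.2 (by rwa [(Subtype.ext heq : t = ⟨ue, hc0⟩)] at ht)
        · exact ⟨we, ⟨⟨we, hw0⟩, q.end_mem_support, rfl⟩, hxw⟩
        · exact ⟨we, ⟨⟨we, hw0⟩, q.end_mem_support, rfl⟩, hyw⟩
        · exact ⟨_, ⟨_, q.start_mem_support, rfl⟩, hadj1⟩
    · -- recursion into a component
      have hArec : ∀ c d : V, G.Adj xe c → G.Adj ye c → G.Adj xe d → G.Adj ye d →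
          d ∉ RSet G S c → a ∉ RSet G S c → b ∉ RSet G S c → HasCompleteMinor G 4 := by
        intro c d hxc hyc hxd hyd hdR haR hbR
        have hcS : c ∈ S := ⟨hxc.ne', hyc.ne'⟩
        have hdS : d ∈ S := ⟨hxd.ne', hyd.ne'⟩
        set s' : Set V := RSet G S c ∪ {xe, ye} with hs'def
        refine IHind s' xe ye (Or.inr (by simp)) (Or.inr (by simp)) ⟨d, ?_⟩ hxy ?_
          ⟨c, Or.inl (mem_RSet_self hcS), hcS.1, hcS.2⟩
        · rintro (h | h)
          · exact hdR h
          · simp only [Set.mem_insert_iff, Set.mem_singleton_iff] at h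
            rcases h with rfl | rfl
            · exact hdS.1 rfl
            · exact hdS.2 rfl
        · intro t hts htx hty
          have htR : t ∈ RSet G S c := by
            rcases hts with h | h
            · exact h
            · simp only [Set.mem_insert_iff, Set.mem_singleton_iff] at h; tauto
          refine ⟨fun u hu => ?_, ?_, ?_⟩
          · by_cases hux : u = xe
            · exact Or.inr (by simp [hux])
            · by_cases huy : u = ye
              · exact Or.inr (by simp [huy])
              · exact Or.inl (RSet_closed htR hu ⟨hux, huy⟩)
          · rintro rfl; exact haR htR
          · rintro rfl; exact hbR htR
      by_cases hau : a ∈ RSet G S ue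
      · refine hArec we ue hxw hyw hxu hyu ?_ ?_ ?_
        · intro h; exact hreach (mem_RSet_symm h)
        · intro h; exact hreach (mem_RSet_trans hau (mem_RSet_symm (mem_RSet_trans h
            (mem_RSet_self (RSet_subset hau)))))
        · intro h
          have haw : a ∈ RSet G S we := RSet_closed h hab.symm (RSet_subset hau)
          exact hreach (mem_RSet_trans hau (mem_RSet_symm haw))
      · by_cases hbu : b ∈ RSet G S ue
        · refine hArec we ue hxw hyw hxu hyu ?_ ?_ ?_
          · intro h; exact hreach (mem_RSet_symm h)
          · intro h
            have hbw : b ∈ RSet G S we := RSet_closed h hab (RSet_subset hbu)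
            exact hreach (mem_RSet_trans hbu (mem_RSet_symm hbw))
          · intro h; exact hreach (mem_RSet_trans hbu (mem_RSet_symm h))
        · exact hArec ue we hxu hyu hxw hyw hreach hau hbu
  · push_neg at hA
    -- Case B1: a contractible edge exists
    by_cases hB : ∃ xc yc : V, (xc ≠ a ∧ xc ≠ b ∧ yc ≠ a ∧ yc ≠ b) ∧ G.Adj xc yc ∧
        ∀ z, z ≠ a → z ≠ b → z ≠ xc → z ≠ yc → G.Adj xc z → G.Adj yc z →
          4 ≤ (G.neighborSet z).ncard
    · obtain ⟨xc, yc, ⟨hxca, hxcb, hyca, hycb⟩, hxcyc, hobs⟩ := hB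
      apply CGraph_minor hxcyc
      have hcardlt : Nat.card {v : V // v ≠ yc} < n := by
        have h1 : Nat.card {v : V // v ≠ yc} = ({v : V | v ≠ yc}).ncard :=
          Nat.card_coe_set_eq _
        have h2 : ({v : V | v ≠ yc}) ⊂ Set.univ := Set.ssubset_univ_iff.mpr
          (by intro h
              have : yc ∈ {v : V | v ≠ yc} := h ▸ Set.mem_univ yc
              exact this rfl)
        have h3 := Set.ncard_lt_ncard h2 Set.finite_univ
        rw [Set.ncard_univ] at h3
        omega
      refine IH _ hcardlt _ (CGraph G xc yc) inferInstance rfl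
        ⟨a, fun h => hyca h.symm⟩ ⟨b, fun h => hycb h.symm⟩ ⟨hab.ne, Or.inl hab⟩ ?_ ?_
      · rintro ⟨z, hzy⟩ hza' hzb'
        have hza : z ≠ a := fun h => hza' (Subtype.ext h)
        have hzb : z ≠ b := fun h => hzb' (Subtype.ext h)
        by_cases hzx : z = xc
        · -- merged vertex
          subst hzx
          have himg := CGraph_nbr_merged (G := G) hxcyc
          have heq : (⟨z, hzy⟩ : {v : V // v ≠ yc}) = ⟨z, hxcyc.ne⟩ := rfl
          rw [heq]
          rw [← Set.ncard_image_of_injective _ Subtype.val_injective, himg]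
          have hU : (G.neighborSet z ∪ G.neighborSet yc) \ {z, yc} =
              (G.neighborSet z \ {yc}) ∪ (G.neighborSet yc \ {z}) := by
            ext t
            simp only [Set.mem_diff, Set.mem_union, Set.mem_insert_iff,
              Set.mem_singleton_iff, not_or, SimpleGraph.mem_neighborSet]
            constructor
            · rintro ⟨h1 | h1, h2, h3⟩
              · exact Or.inl ⟨h1, h3⟩
              · exact Or.inr ⟨h1, h2⟩
            · rintro (⟨h1, h3⟩ | ⟨h1, h2⟩)
              · exact ⟨Or.inl h1, fun h => h1.ne' h, h3⟩
              · exact ⟨Or.inr h1, h2, fun h => h1.ne' h⟩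
          rw [hU]
          have e1 := Set.ncard_diff_singleton_add_one
            (show yc ∈ G.neighborSet z from hxcyc) (Set.toFinite _)
          have e2 := Set.ncard_diff_singleton_add_one
            (show z ∈ G.neighborSet yc from hxcyc.symm) (Set.toFinite _)
          have e3 := hdeg z hza hzb
          have e4 := hdeg yc hyca hycb
          have hI : ((G.neighborSet z \ {yc}) ∩ (G.neighborSet yc \ {z})).ncard ≤ 1 := by
            by_contra h
            push_neg at h
            rw [Set.one_lt_ncard_iff (Set.toFinite _)] at h
            obtain ⟨u, w, hu, hw, huw⟩ := h
            exact huw (hA z yc u w hxcyc hu.1.1 hu.2.1 hw.1.1 hw.2.1)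
          have e5 := Set.ncard_union_add_ncard_inter (G.neighborSet z \ {yc})
            (G.neighborSet yc \ {z}) (Set.toFinite _) (Set.toFinite _)
          omega
        · -- other vertices
          have himg := CGraph_nbr_other (G := G) (x := xc) hxcyc.ne (z := ⟨z, hzy⟩) hzx
          rw [← Set.ncard_image_of_injective _ Subtype.val_injective, himg]
          show 3 ≤ ((G.neighborSet z \ {yc}) ∪ {t | t = xc ∧ G.Adj z yc}).ncard
          by_cases hzyc : G.Adj z yc
          · by_cases hzxc : G.Adj z xc
            · have h4 := hobs z hza hzb hzx hzy hzxc.symm hzyc.symm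
              have hsub : G.neighborSet z \ {yc} ⊆
                  (G.neighborSet z \ {yc}) ∪ {t | t = xc ∧ G.Adj z yc} := Set.subset_union_left
              have hle := Set.ncard_le_ncard hsub (Set.toFinite _)
              have := Set.ncard_diff_singleton_add_one
                (show yc ∈ G.neighborSet z from hzyc) (Set.toFinite _)
              omega
            · have hx : {t : V | t = xc ∧ G.Adj z yc} = {xc} := by
                ext t; simp [hzyc]
              rw [hx, Set.ncard_union_eq (by
                  rw [Set.disjoint_singleton_right]
                  rintro ⟨h1, _⟩
                  exact hzxc h1) (Set.toFinite _) (Set.toFinite _)]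
              have := Set.ncard_diff_singleton_add_one
                (show yc ∈ G.neighborSet z from hzyc) (Set.toFinite _)
              have h3 := hdeg z hza hzb
              rw [Set.ncard_singleton]
              omega
          · have hd : G.neighborSet z \ {yc} = G.neighborSet z := by
              rw [Set.diff_singleton_eq_self]
              exact fun h => hzyc h
            have hx : {t : V | t = xc ∧ G.Adj z yc} = ∅ := by
              ext t; simp [hzyc]
            rw [hx, Set.union_empty, hd]
            exact hdeg z hza hzb
      · by_cases hx0yc : x0 = yc
        · exact ⟨⟨x1, hx0yc ▸ hx1x0⟩, fun h => hx1a (congrArg Subtype.val h),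
            fun h => hx1b (congrArg Subtype.val h)⟩
        · exact ⟨⟨x0, hx0yc⟩, fun h => hx0a (congrArg Subtype.val h),
            fun h => hx0b (congrArg Subtype.val h)⟩
    -- Case B2: the triangle case
    · push_neg at hB
      -- build the triangle x0', y0, z0
      obtain ⟨y0, hy0N, hy0a, hy0b⟩ := exists_third (hdeg x0 hx0a hx0b) hab.ne
      have hx0y0 : G.Adj x0 y0 := hy0N
      obtain ⟨z0, hz0a, hz0b, hz0x0, hz0y0, hx0z0, hy0z0, hz0deg⟩ :=
        hB x0 y0 ⟨hx0a, hx0b, hy0a, hy0b⟩ hx0y0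
      obtain ⟨z1, hz1a, hz1b, hz1x0, hz1z0, hx0z1, hz0z1, hz1deg⟩ :=
        hB x0 z0 ⟨hx0a, hx0b, hz0a, hz0b⟩ hx0z0
      have hz1y0 : z1 = y0 := hA x0 z0 z1 y0 hx0z0 hx0z1 hz0z1 hx0y0 hy0z0.symm
      have hy0deg : (G.neighborSet y0).ncard < 4 := hz1y0 ▸ hz1deg
      obtain ⟨z2, hz2a, hz2b, hz2y0, hz2z0, hy0z2, hz0z2, hz2deg⟩ :=
        hB y0 z0 ⟨hy0a, hy0b, hz0a, hz0b⟩ hy0z0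
      have hz2x0 : z2 = x0 := hA y0 z0 z2 x0 hy0z0 hy0z2 hz0z2 hx0y0.symm hx0z0.symm
      have hx0deg : (G.neighborSet x0).ncard < 4 := hz2x0 ▸ hz2deg
      -- third neighbours p, q, r
      obtain ⟨p, hpN, hpy0, hpz0⟩ := exists_third (hdeg x0 hx0a hx0b)
        (show y0 ≠ z0 from fun h => hz0y0 h.symm)
      obtain ⟨q, hqN, hqx0, hqz0⟩ := exists_third (hdeg y0 hy0a hy0b)
        (show x0 ≠ z0 from fun h => hz0x0 h.symm)
      obtain ⟨r, hrN, hrx0, hry0⟩ := exists_third (hdeg z0 hz0a hz0b)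
        (show x0 ≠ y0 from hx0y0.ne)
      have hx0p : G.Adj x0 p := hpN
      have hy0q : G.Adj y0 q := hqN
      have hz0r : G.Adj z0 r := hrN
      have hNx0 : G.neighborSet x0 = {y0, z0, p} := eq_triple (by omega : _ ≤ 3)
        hx0y0 hx0z0 hpN (fun h => hz0y0 h.symm) hpy0 hpz0
      have hNy0 : G.neighborSet y0 = {x0, z0, q} := eq_triple (by omega : _ ≤ 3)
        hx0y0.symm hy0z0 hqN (fun h => hz0x0 h.symm) hqx0 hqz0
      have hNz0 : G.neighborSet z0 = {x0, y0, r} := eq_triple (by omega : _ ≤ 3)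
        hx0z0.symm hy0z0.symm hrN hx0y0.ne hrx0 hry0
      have hcx0 : ∀ t, G.Adj x0 t → t = y0 ∨ t = z0 ∨ t = p := by
        intro t ht
        have : t ∈ G.neighborSet x0 := ht
        rw [hNx0] at this
        simpa using this
      have hcy0 : ∀ t, G.Adj y0 t → t = x0 ∨ t = z0 ∨ t = q := by
        intro t ht
        have : t ∈ G.neighborSet y0 := ht
        rw [hNy0] at this
        simpa using this
      have hcz0 : ∀ t, G.Adj z0 t → t = x0 ∨ t = y0 ∨ t = r := by
        intro t ht
        have : t ∈ G.neighborSet z0 := ht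
        rw [hNz0] at this
        simpa using this
      have hpq : p ≠ q := by
        intro h
        subst h
        exact hpz0 (hA x0 y0 p z0 hx0y0 hx0p hy0q hx0z0 hy0z0)
      have hqr : q ≠ r := by
        intro h
        subst h
        exact hqx0 (hA y0 z0 q x0 hy0z0 hy0q hz0r hx0y0.symm hx0z0.symm)
      have hpr : p ≠ r := by
        intro h
        subst h
        exact hpy0 (hA x0 z0 p y0 hx0z0 hx0p hz0r hx0y0 hy0z0.symm)
      -- the two recursion patterns
      have hT1 : ∀ x y z pp qq rr : V, G.Adj x y → G.Adj x z → G.Adj y z → G.Adj z rr →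
          (∀ t, G.Adj x t → t = y ∨ t = z ∨ t = pp) →
          (∀ t, G.Adj y t → t = x ∨ t = z ∨ t = qq) →
          rr ≠ x → rr ≠ y →
          pp ∉ RSet G {t | t ≠ x ∧ t ≠ y ∧ t ≠ z} rr →
          qq ∉ RSet G {t | t ≠ x ∧ t ≠ y ∧ t ≠ z} rr →
          a ∉ RSet G {t | t ≠ x ∧ t ≠ y ∧ t ≠ z} rr →
          b ∉ RSet G {t | t ≠ x ∧ t ≠ y ∧ t ≠ z} rr →
          HasCompleteMinor G 4 := by
        intro x y z pp qq rr hxy hxz hyz hzr hcx hcy hrx hry hpR hqR haR hbR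
        set S3 : Set V := {t | t ≠ x ∧ t ≠ y ∧ t ≠ z} with hS3
        have hrS3 : rr ∈ S3 := ⟨hrx, hry, hzr.ne'⟩
        have hrR : rr ∈ RSet G S3 rr := mem_RSet_self hrS3
        have hra : rr ≠ a := fun h => haR (h ▸ hrR)
        have hrb : rr ≠ b := fun h => hbR (h ▸ hrR)
        have hclosure : ∀ t, t ∈ RSet G S3 rr → ∀ u, G.Adj t u →
            u ∈ RSet G S3 rr ∪ {z} := by
          intro t htR u hu
          obtain ⟨htx, hty, htz⟩ := RSet_subset htR
          by_cases huz : u = z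
          · exact Or.inr (by simp [huz])
          by_cases hux : u = x
          · exfalso
            have hxt : G.Adj x t := by rw [← hux]; exact hu.symm
            rcases hcx t hxt with h | h | h
            · exact hty h
            · exact htz h
            · exact hpR (h ▸ htR)
          by_cases huy : u = y
          · exfalso
            have hyt : G.Adj y t := by rw [← huy]; exact hu.symm
            rcases hcy t hyt with h | h | h
            · exact htx h
            · exact htz h
            · exact hqR (h ▸ htR)
          · exact Or.inl (RSet_closed htR hu ⟨hux, huy, huz⟩)
        obtain ⟨t1, ht1N, ht1z, ht1r⟩ := exists_third (hdeg rr hra hrb) (Ne.symm hzr.ne')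
        refine IHind (RSet G S3 rr ∪ {z}) z rr (Or.inr rfl) (Or.inl hrR) ⟨x, ?_⟩ hzr ?_
          ⟨t1, hclosure rr hrR t1 ht1N, ht1z, ht1r⟩
        · rintro (h | h)
          · exact (RSet_subset h).1 rfl
          · have hxez : x = z := by simpa using h
            exact hxz.ne hxez
        · intro t hts htz2 htr
          have htR : t ∈ RSet G S3 rr := by
            rcases hts with h | h
            · exact h
            · have htez : t = z := by simpa using h
              exact absurd htez htz2
          exact ⟨fun u hu => hclosure t htR u hu, fun h => haR (h ▸ htR),
            fun h => hbR (h ▸ htR)⟩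
      have hT2 : ∀ x y z pp qq rr : V, G.Adj x y → G.Adj x z → G.Adj y z →
          G.Adj x pp → G.Adj y qq →
          (∀ t, G.Adj z t → t = x ∨ t = y ∨ t = rr) →
          pp ≠ y → pp ≠ z →
          qq ∈ RSet G {t | t ≠ x ∧ t ≠ y ∧ t ≠ z} pp →
          rr ∉ RSet G {t | t ≠ x ∧ t ≠ y ∧ t ≠ z} pp →
          a ∉ RSet G {t | t ≠ x ∧ t ≠ y ∧ t ≠ z} pp →
          b ∉ RSet G {t | t ≠ x ∧ t ≠ y ∧ t ≠ z} pp →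
          HasCompleteMinor G 4 := by
        intro x y z pp qq rr hxy hxz hyz hxp hyq hcz hpy hpz hqR2 hrR haR hbR
        set S3 : Set V := {t | t ≠ x ∧ t ≠ y ∧ t ≠ z} with hS3
        have hpS3 : pp ∈ S3 := ⟨hxp.ne', hpy, hpz⟩
        have hpR : pp ∈ RSet G S3 pp := mem_RSet_self hpS3
        have hclosure : ∀ t, t ∈ RSet G S3 pp → ∀ u, G.Adj t u →
            u ∈ RSet G S3 pp ∪ {x, y} := by
          intro t htR u hu
          obtain ⟨htx, hty, htz⟩ := RSet_subset htR
          by_cases hux : u = x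
          · exact Or.inr (by simp [hux])
          by_cases huy : u = y
          · exact Or.inr (by simp [huy])
          by_cases huz : u = z
          · exfalso
            have hzt : G.Adj z t := by rw [← huz]; exact hu.symm
            rcases hcz t hzt with h | h | h
            · exact htx h
            · exact hty h
            · exact hrR (h ▸ htR)
          · exact Or.inl (RSet_closed htR hu ⟨hux, huy, huz⟩)
        refine IHind (RSet G S3 pp ∪ {x, y}) x y (Or.inr (by simp)) (Or.inr (by simp))
          ⟨z, ?_⟩ hxy ?_ ⟨pp, Or.inl hpR, hxp.ne', hpy⟩
        · rintro (h | h)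
          · exact (RSet_subset h).2.2 rfl
          · rcases (by simpa using h : z = x ∨ z = y) with h1 | h1
            · exact hxz.ne' h1
            · exact hyz.ne' h1
        · intro t hts htx2 hty2
          have htR : t ∈ RSet G S3 pp := by
            rcases hts with h | h
            · exact h
            · rcases (by simpa using h : t = x ∨ t = y) with h1 | h1
              · exact absurd h1 htx2
              · exact absurd h1 hty2
          exact ⟨fun u hu => hclosure t htR u hu, fun h => haR (h ▸ htR),
            fun h => hbR (h ▸ htR)⟩
      -- dispatch
      have haS : a ∈ {t : V | t ≠ x0 ∧ t ≠ y0 ∧ t ≠ z0} :=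
        ⟨Ne.symm hx0a, Ne.symm hy0a, Ne.symm hz0a⟩
      have hbofa : ∀ c, a ∉ RSet G {t : V | t ≠ x0 ∧ t ≠ y0 ∧ t ≠ z0} c →
          b ∉ RSet G {t : V | t ≠ x0 ∧ t ≠ y0 ∧ t ≠ z0} c := by
        intro c hc hb
        exact hc (RSet_closed hb hab.symm haS)
      have hSe1 : {t : V | t ≠ x0 ∧ t ≠ z0 ∧ t ≠ y0} =
          {t : V | t ≠ x0 ∧ t ≠ y0 ∧ t ≠ z0} := by
        ext t
        constructor <;> rintro ⟨h1, h2, h3⟩ <;> exact ⟨h1, h3, h2⟩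
      have hSe2 : {t : V | t ≠ y0 ∧ t ≠ z0 ∧ t ≠ x0} =
          {t : V | t ≠ x0 ∧ t ≠ y0 ∧ t ≠ z0} := by
        ext t
        constructor <;> rintro ⟨h1, h2, h3⟩
        · exact ⟨h3, h1, h2⟩
        · exact ⟨h2, h3, h1⟩
      have hSp1 : ∀ c, RSet G {t : V | t ≠ x0 ∧ t ≠ z0 ∧ t ≠ y0} c =
          RSet G {t : V | t ≠ x0 ∧ t ≠ y0 ∧ t ≠ z0} c := fun c => by rw [hSe1]
      have hSp2 : ∀ c, RSet G {t : V | t ≠ y0 ∧ t ≠ z0 ∧ t ≠ x0} c =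
          RSet G {t : V | t ≠ x0 ∧ t ≠ y0 ∧ t ≠ z0} c := fun c => by rw [hSe2]
      have hcx0' : ∀ t, G.Adj x0 t → t = z0 ∨ t = y0 ∨ t = p := by
        intro t ht; rcases hcx0 t ht with h | h | h <;> tauto
      have hcy0' : ∀ t, G.Adj y0 t → t = z0 ∨ t = x0 ∨ t = q := by
        intro t ht; rcases hcy0 t ht with h | h | h <;> tauto
      have hcz0' : ∀ t, G.Adj z0 t → t = y0 ∨ t = x0 ∨ t = r := by
        intro t ht; rcases hcz0 t ht with h | h | h <;> tauto
      by_cases hqp : q ∈ RSet G {t : V | t ≠ x0 ∧ t ≠ y0 ∧ t ≠ z0} p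
      · by_cases hrp : r ∈ RSet G {t : V | t ≠ x0 ∧ t ≠ y0 ∧ t ≠ z0} p
        · -- direct K4
          have hpS : p ∈ {t : V | t ≠ x0 ∧ t ≠ y0 ∧ t ≠ z0} := ⟨hx0p.ne', hpy0, hpz0⟩
          exact K4_of_three_comp hx0y0 hx0z0 hy0z0
            (C := RSet G {t : V | t ≠ x0 ∧ t ≠ y0 ∧ t ≠ z0} p) (RSet_connected hpS)
            (fun h => (RSet_subset h).1 rfl) (fun h => (RSet_subset h).2.1 rfl)
            (fun h => (RSet_subset h).2.2 rfl)
            ⟨p, mem_RSet_self hpS, hx0p⟩ ⟨q, hqp, hy0q⟩ ⟨r, hrp, hz0r⟩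
        · have hrq : r ∉ RSet G {t : V | t ≠ x0 ∧ t ≠ y0 ∧ t ≠ z0} q :=
            fun h => hrp (mem_RSet_trans hqp h)
          by_cases har : a ∈ RSet G {t : V | t ≠ x0 ∧ t ≠ y0 ∧ t ≠ z0} r
          · have hap : a ∉ RSet G {t : V | t ≠ x0 ∧ t ≠ y0 ∧ t ≠ z0} p :=
              fun h => hrp (mem_RSet_trans h (mem_RSet_symm har))
            exact hT2 x0 y0 z0 p q r hx0y0 hx0z0 hy0z0 hx0p hy0q hcz0 hpy0 hpz0
              hqp hrp hap (hbofa p hap)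
          · exact hT1 x0 y0 z0 p q r hx0y0 hx0z0 hy0z0 hz0r hcx0 hcy0 hrx0 hry0
              (fun h => hrp (mem_RSet_symm h)) (fun h => hrq (mem_RSet_symm h)) har
              (hbofa r har)
      · by_cases hrp2 : r ∈ RSet G {t : V | t ≠ x0 ∧ t ≠ y0 ∧ t ≠ z0} p
        · have hqr2 : q ∉ RSet G {t : V | t ≠ x0 ∧ t ≠ y0 ∧ t ≠ z0} r :=
            fun h => hqp (mem_RSet_trans hrp2 h)
          by_cases haq : a ∈ RSet G {t : V | t ≠ x0 ∧ t ≠ y0 ∧ t ≠ z0} q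
          · have hap2 : a ∉ RSet G {t : V | t ≠ x0 ∧ t ≠ y0 ∧ t ≠ z0} p :=
              fun h => hqp (mem_RSet_trans h (mem_RSet_symm haq))
            refine hT2 x0 z0 y0 p r q hx0z0 hx0y0 hy0z0.symm hx0p hz0r hcy0 hpz0 hpy0
              ?_ ?_ ?_ ?_
            · rw [hSp1 p]; exact hrp2
            · rw [hSp1 p]; exact hqp
            · rw [hSp1 p]; exact hap2
            · rw [hSp1 p]; exact hbofa p hap2
          · refine hT1 x0 z0 y0 p r q hx0z0 hx0y0 hy0z0.symm hy0q hcx0' hcz0 hqx0 hqz0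
              ?_ ?_ ?_ ?_
            · rw [hSp1 q]; exact fun h => hqp (mem_RSet_symm h)
            · rw [hSp1 q]; exact fun h => hqr2 (mem_RSet_symm h)
            · rw [hSp1 q]; exact haq
            · rw [hSp1 q]; exact hbofa q haq
        · by_cases hrq3 : r ∈ RSet G {t : V | t ≠ x0 ∧ t ≠ y0 ∧ t ≠ z0} q
          · by_cases hap3 : a ∈ RSet G {t : V | t ≠ x0 ∧ t ≠ y0 ∧ t ≠ z0} p
            · have haq2 : a ∉ RSet G {t : V | t ≠ x0 ∧ t ≠ y0 ∧ t ≠ z0} q :=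
                fun h => hqp (mem_RSet_trans hap3 (mem_RSet_symm h))
              refine hT2 y0 z0 x0 q r p hy0z0 hx0y0.symm hx0z0.symm hy0q hz0r hcx0
                hqz0 hqx0 ?_ ?_ ?_ ?_
              · rw [hSp2 q]; exact hrq3
              · rw [hSp2 q]; exact fun h => hqp (mem_RSet_symm h)
              · rw [hSp2 q]; exact haq2
              · rw [hSp2 q]; exact hbofa q haq2
            · refine hT1 y0 z0 x0 q r p hy0z0 hx0y0.symm hx0z0.symm hx0p hcy0' hcz0'
                hpy0 hpz0 ?_ ?_ ?_ ?_
              · rw [hSp2 p]; exact hqp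
              · rw [hSp2 p]; exact hrp2
              · rw [hSp2 p]; exact hap3
              · rw [hSp2 p]; exact hbofa p hap3
          · by_cases hap4 : a ∈ RSet G {t : V | t ≠ x0 ∧ t ≠ y0 ∧ t ≠ z0} p
            · have haq3 : a ∉ RSet G {t : V | t ≠ x0 ∧ t ≠ y0 ∧ t ≠ z0} q :=
                fun h => hqp (mem_RSet_trans hap4 (mem_RSet_symm h))
              refine hT1 x0 z0 y0 p r q hx0z0 hx0y0 hy0z0.symm hy0q hcx0' hcz0 hqx0 hqz0
                ?_ ?_ ?_ ?_
              · rw [hSp1 q]; exact fun h => hqp (mem_RSet_symm h)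
              · rw [hSp1 q]; exact hrq3
              · rw [hSp1 q]; exact haq3
              · rw [hSp1 q]; exact hbofa q haq3
            · refine hT1 y0 z0 x0 q r p hy0z0 hx0y0.symm hx0z0.symm hx0p hcy0' hcz0'
                hpy0 hpz0 ?_ ?_ ?_ ?_
              · rw [hSp2 p]; exact hqp
              · rw [hSp2 p]; exact hrp2
              · rw [hSp2 p]; exact hap4
              · rw [hSp2 p]; exact hbofa p hap4

end MainLemma
section Coloring

universe u

lemma finColorable (n : ℕ) : ∀ (V : Type u) (G : SimpleGraph V) (_ : Finite V)
    (_ : Nat.card V = n), ¬ HasCompleteMinor G 4 → G.Colorable 3 := by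
  induction n using Nat.strong_induction_on with
  | _ n IH =>
  intro V G hfin hcard hK4
  haveI : Finite V := hfin
  classical
  by_cases hne : Nonempty V
  · by_cases hd : ∃ v : V, (G.neighborSet v).ncard ≤ 2
    · obtain ⟨v, hv⟩ := hd
      have hlt : Nat.card ↥{t : V | t ≠ v} < n := by
        have h1 : Nat.card ↥{t : V | t ≠ v} = ({t : V | t ≠ v}).ncard :=
          Nat.card_coe_set_eq _
        have h2 : ({t : V | t ≠ v}) ⊂ Set.univ := Set.ssubset_univ_iff.mpr
          (by intro h
              have : v ∈ {t : V | t ≠ v} := h ▸ Set.mem_univ v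
              exact this rfl)
        have h3 := Set.ncard_lt_ncard h2 Set.finite_univ
        rw [Set.ncard_univ] at h3
        omega
      obtain ⟨C⟩ := IH _ hlt ↥{t : V | t ≠ v} (G.induce {t : V | t ≠ v}) inferInstance rfl
        (fun hm => hK4 (minor_induce hm))
      -- find a color not used on the neighbors of v
      have hcolors : ((fun u => if h : u = v then (0 : Fin 3) else C ⟨u, h⟩) ''
          G.neighborSet v) ≠ Set.univ := by
        intro h
        have h1 : ((fun u => if h : u = v then (0 : Fin 3) else C ⟨u, h⟩) ''
            G.neighborSet v).ncard ≤ 2 :=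
          le_trans (Set.ncard_image_le (Set.toFinite _)) hv
        rw [h, Set.ncard_univ] at h1
        simp [Nat.card_eq_fintype_card] at h1
      obtain ⟨k, hk⟩ := Set.ne_univ_iff_exists_notMem _ |>.mp hcolors
      refine ⟨SimpleGraph.Coloring.mk (fun t => if h : t = v then k else C ⟨t, h⟩) ?_⟩
      intro p q hpq heq
      by_cases hp : p = v
      · have hq : q ≠ v := fun h => hpq.ne (hp.trans h.symm)
        rw [dif_pos hp, dif_neg hq] at heq
        refine hk ⟨q, show G.Adj v q by rw [← hp]; exact hpq, ?_⟩
        dsimp only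
        rw [dif_neg hq]
        exact heq.symm
      · rw [dif_neg hp] at heq
        by_cases hq : q = v
        · rw [dif_pos hq] at heq
          refine hk ⟨p, show G.Adj v p by rw [← hq]; exact hpq.symm, ?_⟩
          dsimp only
          rw [dif_neg hp]
          exact heq
        · rw [dif_neg hq] at heq
          exact C.valid (show (G.induce {t : V | t ≠ v}).Adj ⟨p, hp⟩ ⟨q, hq⟩ from hpq) heq
    · exfalso
      push_neg at hd
      obtain ⟨v⟩ := hne
      have h3 := hd v
      have hnbr : (G.neighborSet v).Nonempty := by
        rcases Set.eq_empty_or_nonempty (G.neighborSet v) with he | h2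
        · exfalso
          rw [he, Set.ncard_empty] at h3
          omega
        · exact h2
      obtain ⟨u, hu⟩ := hnbr
      obtain ⟨p, hpN, hpu, hpv⟩ := exists_third h3 (show u ≠ v from (hu : G.Adj v u).ne')
      exact hK4 (lemM n V G hfin hcard v u hu (fun x _ _ => hd x) ⟨p, hpv, hpu⟩)
  · haveI := not_nonempty_iff.mp hne
    exact SimpleGraph.Colorable.of_isEmpty 3

end Coloring

/-- Hadwiger's conjecture for k = 4 (Dirac): every graph with chromatic number at
least 4 contains a `K_4` minor. -/
theorem hasCompleteMinor_four_of_chromaticNumber {V : Type*} (G : SimpleGraph V)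
    (h : 4 ≤ G.chromaticNumber) : HasCompleteMinor G 4 := by
  by_contra hmin
  have key : ∀ G' : G.Subgraph, G'.verts.Finite → G'.coe →g completeGraph (Fin 3) := by
    intro G' hfin
    haveI : Finite ↥G'.verts := hfin.to_subtype
    have hK4 : ¬ HasCompleteMinor G'.coe 4 := by
      intro hm
      exact hmin (minor_map Subtype.val Subtype.val_injective
        (fun p q hpq => G'.adj_sub hpq) hm)
    exact (finColorable (Nat.card ↥G'.verts) ↥G'.verts G'.coe inferInstance rfl hK4).some
  have h3 : G.Colorable 3 := by
    obtain ⟨f⟩ := SimpleGraph.nonempty_hom_of_forall_finite_subgraph_hom key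
    exact ⟨f⟩
  have := h3.chromaticNumber_le
  have h43 : ¬ ((4 : ℕ∞) ≤ (3 : ℕ)) := by norm_num
  exact h43 (le_trans h this)
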